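/- For every p, v > 0 and every k ≥ 1, the function K_k = √(g_p) · H_k^{[p]} is an eigenfunction of Λ*Λ with eigenvalue (p/(p+v))^k, where Λ : L²(dx) → L²(dx) is the operator ΛK = ((√(g_p) K) ⋆ g_v)/√(g_{p+v}) and Λ* its adjoint. That is, Λ*Λ K_k = (p/(p+v))^k K_k. -/

import Mathlib

open MeasureTheory Real

/-- Probabilists' Hermite polynomial `H_k(x) = (-1)^k e^{x²/2} (d^k/dx^k) e^{-x²/2}`. -/
noncomputable def hermiteH (k : ℕ) (x : ℝ) : ℝ :=
  (-1 : ℝ) ^ k * Real.exp (x ^ 2 / 2) *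
    iteratedDeriv k (fun y : ℝ => Real.exp (-(y ^ 2) / 2)) x

/-- Centered Gaussian density of variance `p`. -/
noncomputable def gauss (p : ℝ) (x : ℝ) : ℝ :=
  (Real.sqrt (2 * Real.pi * p))⁻¹ * Real.exp (-(x ^ 2) / (2 * p))

/-- Normalized Hermite polynomial adapted to variance `p`:
`H_k^{[p]}(x) = H_k(x/√p)/√(k!)`. -/
noncomputable def hermiteN (p : ℝ) (k : ℕ) (x : ℝ) : ℝ :=
  (Real.sqrt (Nat.factorial k))⁻¹ * hermiteH k (x / Real.sqrt p)

/-- The channel perturbation operator `Λ K = ((√g_p K) ⋆ g_v)/√g_{p+v}` on `L²(dx)`. -/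
noncomputable def lamOp (p v : ℝ) (K : ℝ → ℝ) (x : ℝ) : ℝ :=
  (∫ t, Real.sqrt (gauss p t) * K t * gauss v (x - t)) / Real.sqrt (gauss (p + v) x)

/-- Its adjoint `Λ* M (t) = √g_p(t) · ((M/√g_{p+v}) ⋆ g_v)(t)`. -/
noncomputable def lamOpStar (p v : ℝ) (M : ℝ → ℝ) (t : ℝ) : ℝ :=
  Real.sqrt (gauss p t) * ∫ x, M x / Real.sqrt (gauss (p + v) x) * gauss v (x - t)

open MeasureTheory Real Polynomial Filter

lemma derivative_hermite' (n : ℕ) :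
    derivative (hermite (n+1)) = ((n : ℤ[X]) + 1) * hermite n := by
  induction n with
  | zero => simp [hermite_one, hermite_zero]
  | succ n ih =>
    rw [hermite_succ (n+1), derivative_sub, derivative_mul, derivative_X, ih, derivative_mul]
    rw [hermite_succ n]
    simp only [derivative_add, derivative_natCast, derivative_one, Nat.cast_add, Nat.cast_one]
    ring

noncomputable def HeP (k : ℕ) : ℝ[X] := (hermite k).map (algebraMap ℤ ℝ)

lemma HeP_zero : HeP 0 = 1 := by simp [HeP, hermite_zero]
lemma HeP_one : HeP 1 = X := by simp [HeP, hermite_one]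

lemma derivative_HeP (n : ℕ) : derivative (HeP (n+1)) = ((n : ℝ[X]) + 1) * HeP n := by
  rw [HeP, derivative_map, derivative_hermite', Polynomial.map_mul]
  simp [HeP]

lemma HeP_succ_succ (n : ℕ) : HeP (n+2) = X * HeP (n+1) - ((n : ℝ[X]) + 1) * HeP n := by
  rw [HeP, hermite_succ (n+1), Polynomial.map_sub, Polynomial.map_mul, map_X,
    ← derivative_map, ← HeP, derivative_HeP, HeP]

lemma hermiteH_eq_eval (k : ℕ) (x : ℝ) : hermiteH k x = eval x (HeP k) := by
  have h1 : (fun y : ℝ => Real.exp (-(y ^ 2) / 2)) = (fun y : ℝ => Real.exp (-(y ^ 2 / 2))) := by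
    funext y; ring_nf
  have h2 : eval x (HeP k) = aeval x (hermite k) := by
    rw [HeP, aeval_def, eval_map]
  rw [hermiteH, iteratedDeriv_eq_iterate, h1, deriv_gaussian_eq_hermite_mul_gaussian, h2]
  have h3 : ((-1 : ℝ)) ^ k * ((-1 : ℝ)) ^ k = 1 := by
    rw [← pow_add]; exact Even.neg_one_pow ⟨k, by ring⟩
  have h4 : Real.exp (x ^ 2 / 2) * Real.exp (-(x ^ 2 / 2)) = 1 := by
    rw [← Real.exp_add]; simp
  calc (-1:ℝ) ^ k * Real.exp (x ^ 2 / 2) * ((-1:ℝ) ^ k * (aeval x) (hermite k) * Real.exp (-(x ^ 2 / 2)))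
      = ((-1:ℝ) ^ k * (-1:ℝ) ^ k) * (Real.exp (x ^ 2 / 2) * Real.exp (-(x ^ 2 / 2))) * (aeval x) (hermite k) := by ring
    _ = (aeval x) (hermite k) := by rw [h3, h4]; ring
noncomputable def pg (P : ℝ[X]) (u : ℝ) : ℝ := eval u P * Real.exp (-(1/2) * u ^ 2)

lemma pg_integrable (P : ℝ[X]) : Integrable (pg P) := by
  induction P using Polynomial.induction_on' with
  | add p q hp hq =>
    have : pg (p + q) = fun u => pg p u + pg q u := by
      funext u; simp [pg, add_mul]
    rw [this]; exact hp.add hq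
  | monomial n c =>
    have h : Integrable (fun u : ℝ => u ^ n * Real.exp (-(1/2) * u ^ 2)) := by
      have hs : (-1 : ℝ) < (n : ℝ) := lt_of_lt_of_le neg_one_lt_zero (Nat.cast_nonneg n)
      simpa [Real.rpow_natCast] using
        integrable_rpow_mul_exp_neg_mul_sq (b := 1/2) (by norm_num) hs
    have := h.const_mul c
    have heq : pg (monomial n c) = fun u => c * (u ^ n * Real.exp (-(1/2) * u ^ 2)) := by
      funext u; simp [pg, eval_monomial]; ring
    rw [heq]; exact this

lemma pg_tendsto_atTop (P : ℝ[X]) : Tendsto (pg P) atTop (nhds 0) := by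
  induction P using Polynomial.induction_on' with
  | add p q hp hq =>
    have : pg (p + q) = fun u => pg p u + pg q u := by funext u; simp [pg, add_mul]
    rw [this]; simpa using hp.add hq
  | monomial n c =>
    have h : Tendsto (fun u : ℝ => u ^ n * Real.exp (-(1/2) * u ^ 2)) atTop (nhds 0) := by
      have hlo := rpow_mul_exp_neg_mul_sq_isLittleO_exp_neg (b := 1/2) (by norm_num) (n : ℝ)
      simp_rw [Real.rpow_natCast] at hlo
      refine hlo.tendsto_zero_of_tendsto (y := (0:ℝ)) ?_
      have h1 : Tendsto (fun x : ℝ => -(1/2 : ℝ) * x) atTop atBot := by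
        have := (tendsto_id (α := ℝ) (x := atTop)).const_mul_atTop (r := (1/2:ℝ)) (by norm_num)
        have h2 := tendsto_neg_atTop_atBot.comp this
        simpa [Function.comp_def, neg_mul] using h2
      exact Real.tendsto_exp_atBot.comp h1
    have heq : pg (monomial n c) = fun u => c * (u ^ n * Real.exp (-(1/2) * u ^ 2)) := by
      funext u; simp [pg, eval_monomial]; ring
    rw [heq]
    simpa using h.const_mul c
lemma pg_tendsto_atBot (P : ℝ[X]) : Tendsto (pg P) atBot (nhds 0) := by
  have h := (pg_tendsto_atTop (P.comp (-X))).comp tendsto_neg_atBot_atTop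
  have heq : (pg (P.comp (-X))) ∘ (fun u : ℝ => -u) = pg P := by
    funext u; simp [pg, eval_comp]
  rwa [heq] at h

lemma pg_hasDerivAt (P : ℝ[X]) (u : ℝ) :
    HasDerivAt (pg P) (pg (derivative P - X * P) u) u := by
  have h1 := P.hasDerivAt u
  have h0 : HasDerivAt (fun x : ℝ => -(1/2 : ℝ) * x ^ 2) (-u) u := by
    have := (hasDerivAt_pow 2 u).const_mul (-(1/2) : ℝ)
    simpa using this
  have h2 : HasDerivAt (fun x : ℝ => Real.exp (-(1/2) * x ^ 2))
      (-u * Real.exp (-(1/2) * u ^ 2)) u := by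
    simpa [mul_comm] using h0.exp
  have h3 := h1.mul h2
  have : eval u (derivative P) * Real.exp (-(1/2) * u ^ 2) +
      eval u P * (-u * Real.exp (-(1/2) * u ^ 2)) = pg (derivative P - X * P) u := by
    simp [pg]; ring
  rw [this] at h3
  exact h3

lemma pg_integral_deriv_eq_zero (P : ℝ[X]) :
    ∫ u, pg (derivative P - X * P) u = 0 := by
  have hint : Integrable (pg (derivative P - X * P)) := pg_integrable _
  have h1 : ∫ u in Set.Iic (0:ℝ), pg (derivative P - X * P) u = pg P 0 - 0 :=
    integral_Iic_of_hasDerivAt_of_tendsto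
      (pg_hasDerivAt P 0).continuousAt.continuousWithinAt
      (fun x _ => pg_hasDerivAt P x) hint.integrableOn (pg_tendsto_atBot P)
  have h2 : ∫ u in Set.Ioi (0:ℝ), pg (derivative P - X * P) u = 0 - pg P 0 :=
    integral_Ioi_of_hasDerivAt_of_tendsto
      (pg_hasDerivAt P 0).continuousAt.continuousWithinAt
      (fun x _ => pg_hasDerivAt P x) hint.integrableOn (pg_tendsto_atTop P)
  rw [← intervalIntegral.integral_Iic_add_Ioi hint.integrableOn hint.integrableOn, h1, h2]
  ring
lemma core (a b : ℝ) (ha : a^2 < 1) :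
    ∀ k : ℕ, ∫ u : ℝ, eval (a*u+b) (HeP k) * Real.exp (-(1/2) * u^2)
      = Real.sqrt (2*π) * (Real.sqrt (1-a^2))^k * eval (b / Real.sqrt (1-a^2)) (HeP k) := by
  have h1a : (0:ℝ) < 1 - a^2 := by nlinarith [sq_nonneg a]
  set c := Real.sqrt (1-a^2) with hcdef
  have hc : 0 < c := Real.sqrt_pos.mpr h1a
  have hc2 : c^2 = 1 - a^2 := Real.sq_sqrt h1a.le
  set L : ℝ[X] := C a * X + C b with hL
  have hcomp : ∀ (Q : ℝ[X]) (u : ℝ), eval u (Q.comp L) = eval (a*u+b) Q := by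
    intro Q u; rw [eval_comp]; simp [hL]
  have hpg : ∀ (Q : ℝ[X]), pg (Q.comp L) = fun u => eval (a*u+b) Q * Real.exp (-(1/2)*u^2) := by
    intro Q; funext u; rw [pg, hcomp]
  have hderivL : derivative L = C a := by simp [hL]
  have base0 : ∫ u : ℝ, Real.exp (-(1/2) * u^2) = Real.sqrt (2*π) := by
    have h := integral_gaussian (1/2)
    rw [show π / (1/2 : ℝ) = 2*π by ring] at h
    simpa using h
  have odd1 : ∫ u : ℝ, u * Real.exp (-(1/2) * u^2) = 0 := by
    have h := MeasureTheory.integral_neg_eq_self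
      (fun u : ℝ => u * Real.exp (-(1/2) * u^2)) volume
    simp only [neg_sq, neg_mul] at h
    rw [integral_neg] at h
    simp only [neg_mul]
    linarith [h]
  -- the key step lemma
  have key : ∀ k : ℕ,
      (∫ u : ℝ, u * eval (a*u+b) (HeP (k+1)) * Real.exp (-(1/2) * u^2))
        = a * ((k:ℝ)+1) * ∫ u : ℝ, eval (a*u+b) (HeP k) * Real.exp (-(1/2) * u^2) := by
    intro k
    have hz := pg_integral_deriv_eq_zero ((HeP (k+1)).comp L)
    have hder : derivative ((HeP (k+1)).comp L)
        = C (a * ((k:ℝ)+1)) * ((HeP k).comp L) := by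
      rw [derivative_comp, hderivL, derivative_HeP, mul_comp]
      simp [C_mul]
      ring
    have hsplit : pg (C (a * ((k:ℝ)+1)) * ((HeP k).comp L) - X * ((HeP (k+1)).comp L))
        = fun u => a * ((k:ℝ)+1) * (eval (a*u+b) (HeP k) * Real.exp (-(1/2)*u^2))
            - u * eval (a*u+b) (HeP (k+1)) * Real.exp (-(1/2)*u^2) := by
      funext u
      simp only [pg, eval_sub, eval_mul, eval_C, eval_X, hcomp]
      ring
    rw [hder, hsplit] at hz
    have iA : Integrable (fun u : ℝ =>
        a * ((k:ℝ)+1) * (eval (a*u+b) (HeP k) * Real.exp (-(1/2)*u^2))) := by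
      have h0 := pg_integrable ((HeP k).comp L)
      rw [hpg] at h0
      exact h0.const_mul _
    have iB : Integrable (fun u : ℝ =>
        u * eval (a*u+b) (HeP (k+1)) * Real.exp (-(1/2)*u^2)) := by
      have h0 := pg_integrable (X * ((HeP (k+1)).comp L))
      have heq : pg (X * ((HeP (k+1)).comp L))
          = fun u => u * eval (a*u+b) (HeP (k+1)) * Real.exp (-(1/2)*u^2) := by
        funext u; simp only [pg, eval_mul, eval_X, hcomp]; try ring
      rwa [heq] at h0
    rw [integral_sub iA iB, integral_const_mul] at hz
    linarith [hz]
  -- main induction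
  suffices H : ∀ k : ℕ,
      (∫ u : ℝ, eval (a*u+b) (HeP k) * Real.exp (-(1/2) * u^2)
        = Real.sqrt (2*π) * c^k * eval (b / c) (HeP k)) ∧
      (∫ u : ℝ, eval (a*u+b) (HeP (k+1)) * Real.exp (-(1/2) * u^2)
        = Real.sqrt (2*π) * c^(k+1) * eval (b / c) (HeP (k+1))) by
    intro k; exact (H k).1
  intro k
  induction k with
  | zero =>
    have hi0 : Integrable (fun u : ℝ => u * Real.exp (-(1/2)*u^2)) :=
      integrable_mul_exp_neg_mul_sq (by norm_num)
    have hi0' : Integrable (fun u : ℝ => Real.exp (-(1/2)*u^2)) :=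
      integrable_exp_neg_mul_sq (by norm_num)
    constructor
    · simpa [HeP_zero] using base0
    · simp only [HeP_one, eval_X, zero_add, pow_one]
      have hfe : (fun u : ℝ => (a*u+b) * Real.exp (-(1/2)*u^2))
          = fun u => a * (u * Real.exp (-(1/2)*u^2)) + b * Real.exp (-(1/2)*u^2) := by
        funext u; ring
      have ha' : Integrable (fun u : ℝ => a * (u * Real.exp (-(1/2)*u^2))) := hi0.const_mul a
      have hb' : Integrable (fun u : ℝ => b * Real.exp (-(1/2)*u^2)) := hi0'.const_mul b
      rw [hfe, integral_add ha' hb', integral_const_mul, integral_const_mul, odd1, base0]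
      field_simp
      ring
  | succ k ih =>
    refine ⟨ih.2, ?_⟩
    have iA : Integrable (fun u : ℝ =>
        u * eval (a*u+b) (HeP (k+1)) * Real.exp (-(1/2)*u^2)) := by
      have h0 := pg_integrable (X * ((HeP (k+1)).comp L))
      have heq : pg (X * ((HeP (k+1)).comp L))
          = fun u => u * eval (a*u+b) (HeP (k+1)) * Real.exp (-(1/2)*u^2) := by
        funext u; simp only [pg, eval_mul, eval_X, hcomp]; try ring
      rwa [heq] at h0
    have iB : Integrable (fun u : ℝ =>
        eval (a*u+b) (HeP (k+1)) * Real.exp (-(1/2)*u^2)) := by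
      have h0 := pg_integrable ((HeP (k+1)).comp L); rwa [hpg] at h0
    have iC : Integrable (fun u : ℝ =>
        eval (a*u+b) (HeP k) * Real.exp (-(1/2)*u^2)) := by
      have h0 := pg_integrable ((HeP k).comp L); rwa [hpg] at h0
    have hfe : (fun u : ℝ => eval (a*u+b) (HeP (k+2)) * Real.exp (-(1/2)*u^2))
        = fun u => a * (u * eval (a*u+b) (HeP (k+1)) * Real.exp (-(1/2)*u^2))
            + b * (eval (a*u+b) (HeP (k+1)) * Real.exp (-(1/2)*u^2))
            - ((k:ℝ)+1) * (eval (a*u+b) (HeP k) * Real.exp (-(1/2)*u^2)) := by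
      funext u
      rw [HeP_succ_succ]
      simp only [eval_sub, eval_mul, eval_X, eval_add, eval_natCast, eval_one]
      ring
    have hAB : Integrable (fun u : ℝ =>
        a * (u * eval (a*u+b) (HeP (k+1)) * Real.exp (-(1/2)*u^2))
          + b * (eval (a*u+b) (HeP (k+1)) * Real.exp (-(1/2)*u^2))) :=
      (iA.const_mul a).add (iB.const_mul b)
    have hC : Integrable (fun u : ℝ =>
        ((k:ℝ)+1) * (eval (a*u+b) (HeP k) * Real.exp (-(1/2)*u^2))) := iC.const_mul _
    rw [hfe, integral_sub hAB hC,
      integral_add (iA.const_mul a) (iB.const_mul b),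
      integral_const_mul, integral_const_mul, integral_const_mul, key k, ih.1, ih.2]
    have he2 : eval (b/c) (HeP (k+2))
        = (b/c) * eval (b/c) (HeP (k+1)) - ((k:ℝ)+1) * eval (b/c) (HeP k) := by
      rw [HeP_succ_succ]
      simp only [eval_sub, eval_mul, eval_X, eval_add, eval_natCast, eval_one]
    rw [he2]
    have hc0 : c ≠ 0 := hc.ne'
    have hca : a^2 = 1 - c^2 := by linarith [hc2]
    have hbc : c * (b / c) = b := by field_simp
    linear_combination (Real.sqrt (2*π) * ((k:ℝ)+1) * c^k * eval (b/c) (HeP k)) * hca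
      - (Real.sqrt (2*π) * c^(k+1) * eval (b/c) (HeP (k+1))) * hbc
lemma smooth (c s m : ℝ) (hc : 0 < c) (hs : 0 < s) (hsc : s < c^2) (k : ℕ) :
    ∫ t : ℝ, eval (t / c) (HeP k) * gauss s (t - m)
      = (Real.sqrt (1 - s/c^2)) ^ k * eval ((m / c) / Real.sqrt (1 - s/c^2)) (HeP k) := by
  have hss : Real.sqrt s > 0 := Real.sqrt_pos.mpr hs
  set F : ℝ → ℝ := fun t => eval (t / c) (HeP k) * gauss s (t - m) with hF
  set a : ℝ := Real.sqrt s / c with hadef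
  set b : ℝ := m / c with hbdef
  have ha2 : a^2 = s/c^2 := by rw [hadef, div_pow, Real.sq_sqrt hs.le]
  have ha1 : a^2 < 1 := by
    rw [ha2, div_lt_one (by positivity)]; exact hsc
  have hsub : ∫ u : ℝ, F (Real.sqrt s * u + m) = (Real.sqrt s)⁻¹ * ∫ t, F t := by
    have h := MeasureTheory.Measure.integral_comp_mul_left
      (fun y => F (y + m)) (Real.sqrt s)
    simp only [smul_eq_mul] at h
    rw [MeasureTheory.integral_add_right_eq_self (fun y => F y) m] at h
    rw [abs_of_pos (by positivity)] at h
    exact h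
  have hstep : ∫ t, F t = Real.sqrt s * ∫ u : ℝ, F (Real.sqrt s * u + m) := by
    rw [hsub, ← mul_assoc, mul_inv_cancel₀ hss.ne', one_mul]
  have hptw : ∀ u : ℝ, F (Real.sqrt s * u + m)
      = (Real.sqrt (2*π*s))⁻¹ * (eval (a*u+b) (HeP k) * Real.exp (-(1/2) * u^2)) := by
    intro u
    have e1 : (Real.sqrt s * u + m) / c = a*u+b := by rw [hadef, hbdef]; ring
    have e2 : Real.sqrt s * u + m - m = Real.sqrt s * u := by ring
    have e3 : -((Real.sqrt s * u)^2) / (2*s) = -(1/2) * u^2 := by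
      rw [mul_pow, Real.sq_sqrt hs.le]; field_simp
    rw [hF]
    simp only
    rw [e1, e2, gauss, e3]
    ring
  rw [hstep]
  simp only [hptw]
  rw [integral_const_mul, core a b ha1 k, ha2]
  have e4 : Real.sqrt (2*π*s) = Real.sqrt (2*π) * Real.sqrt s := by
    rw [← Real.sqrt_mul (by positivity)]
  have e5 : b / Real.sqrt (1 - s/c^2) = m / c / Real.sqrt (1 - s/c^2) := by rw [hbdef]
  rw [e4, e5]
  have h2pi : Real.sqrt (2*π) > 0 := Real.sqrt_pos.mpr (by positivity)
  field_simp

lemma gauss_pos {p : ℝ} (hp : 0 < p) (x : ℝ) : 0 < gauss p x := by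
  rw [gauss]
  have : (0:ℝ) < Real.sqrt (2*π*p) := Real.sqrt_pos.mpr (by positivity)
  positivity

lemma gauss_mul (p v : ℝ) (hp : 0 < p) (hv : 0 < v) (x t : ℝ) :
    gauss p t * gauss v (x - t)
      = gauss (p+v) x * gauss (p*v/(p+v)) (t - p*x/(p+v)) := by
  have hq : (0:ℝ) < p + v := by linarith
  have hconst : (Real.sqrt (2*π*p))⁻¹ * (Real.sqrt (2*π*v))⁻¹
      = (Real.sqrt (2*π*(p+v)))⁻¹ * (Real.sqrt (2*π*(p*v/(p+v))))⁻¹ := by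
    rw [← mul_inv, ← mul_inv, ← Real.sqrt_mul (by positivity), ← Real.sqrt_mul (by positivity)]
    congr 2
    field_simp
  have hexp : Real.exp (-(t^2) / (2*p)) * Real.exp (-((x-t)^2) / (2*v))
      = Real.exp (-(x^2) / (2*(p+v))) * Real.exp (-((t - p*x/(p+v))^2) / (2*(p*v/(p+v)))) := by
    rw [← Real.exp_add, ← Real.exp_add]
    congr 1
    field_simp
    ring
  unfold gauss
  calc (Real.sqrt (2*π*p))⁻¹ * Real.exp (-(t^2) / (2*p))
        * ((Real.sqrt (2*π*v))⁻¹ * Real.exp (-((x-t)^2) / (2*v)))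
      = ((Real.sqrt (2*π*p))⁻¹ * (Real.sqrt (2*π*v))⁻¹)
        * (Real.exp (-(t^2) / (2*p)) * Real.exp (-((x-t)^2) / (2*v))) := by ring
    _ = ((Real.sqrt (2*π*(p+v)))⁻¹ * (Real.sqrt (2*π*(p*v/(p+v))))⁻¹)
        * (Real.exp (-(x^2) / (2*(p+v))) * Real.exp (-((t - p*x/(p+v))^2) / (2*(p*v/(p+v))))) := by
      rw [hconst, hexp]
    _ = _ := by ring
/-- `K_k = √g_p · H_k^{[p]}` is an eigenfunction of `Λ*Λ` with eigenvalue `(p/(p+v))^k`. -/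
theorem hermite_fun_eigen (p v : ℝ) (hp : 0 < p) (hv : 0 < v) (k : ℕ) (hk : 1 ≤ k)
    (x : ℝ) :
    lamOpStar p v (lamOp p v (fun t => Real.sqrt (gauss p t) * hermiteN p k t)) x =
      (p / (p + v)) ^ k * (Real.sqrt (gauss p x) * hermiteN p k x) := by
  have hq : (0:ℝ) < p + v := by linarith
  have hsp : (0:ℝ) < Real.sqrt p := Real.sqrt_pos.mpr hp
  have hsq : (0:ℝ) < Real.sqrt (p+v) := Real.sqrt_pos.mpr hq
  have ecp : (Real.sqrt p)^2 = p := Real.sq_sqrt hp.le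
  have ecq : (Real.sqrt (p+v))^2 = p + v := Real.sq_sqrt hq.le
  have hlam : ∀ y : ℝ, lamOp p v (fun t => Real.sqrt (gauss p t) * hermiteN p k t) y
      = (Real.sqrt (Nat.factorial k))⁻¹ * (Real.sqrt (p/(p+v)))^k
          * (Real.sqrt (gauss (p+v) y) * eval (y / Real.sqrt (p+v)) (HeP k)) := by
    intro y
    simp only [lamOp]
    have hint : (fun t => Real.sqrt (gauss p t) * (Real.sqrt (gauss p t) * hermiteN p k t)
          * gauss v (y - t))
        = fun t => (Real.sqrt (Nat.factorial k))⁻¹ * (gauss (p+v) y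
            * (eval (t / Real.sqrt p) (HeP k) * gauss (p*v/(p+v)) (t - p*y/(p+v)))) := by
      funext t
      rw [hermiteN, hermiteH_eq_eval]
      have hss : Real.sqrt (gauss p t) * Real.sqrt (gauss p t) = gauss p t :=
        Real.mul_self_sqrt (gauss_pos hp t).le
      calc Real.sqrt (gauss p t) * (Real.sqrt (gauss p t)
              * ((Real.sqrt (Nat.factorial k))⁻¹ * eval (t / Real.sqrt p) (HeP k)))
            * gauss v (y - t)
          = (Real.sqrt (Nat.factorial k))⁻¹ * (eval (t / Real.sqrt p) (HeP k)
              * ((Real.sqrt (gauss p t) * Real.sqrt (gauss p t)) * gauss v (y - t))) := by ring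
        _ = (Real.sqrt (Nat.factorial k))⁻¹ * (eval (t / Real.sqrt p) (HeP k)
              * (gauss p t * gauss v (y - t))) := by rw [hss]
        _ = _ := by rw [gauss_mul p v hp hv y t]; ring
    rw [hint, integral_const_mul, integral_const_mul]
    have hsc : p*v/(p+v) < (Real.sqrt p)^2 := by
      rw [ecp]
      rw [div_lt_iff₀ hq]
      nlinarith
    rw [smooth (Real.sqrt p) (p*v/(p+v)) (p*y/(p+v)) hsp (by positivity) hsc k]
    have e1 : 1 - (p*v/(p+v))/(Real.sqrt p)^2 = p/(p+v) := by
      rw [ecp]; field_simp; ring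
    have e2 : p*y/(p+v) / Real.sqrt p / Real.sqrt (p/(p+v)) = y / Real.sqrt (p+v) := by
      rw [Real.sqrt_div hp.le]
      field_simp
      ring_nf
      simp only [Real.sq_sqrt hp.le, Real.sq_sqrt hq.le]
      ring
    rw [e1, e2]
    have hdiv : gauss (p+v) y / Real.sqrt (gauss (p+v) y) = Real.sqrt (gauss (p+v) y) :=
      Real.div_sqrt
    calc (Real.sqrt (Nat.factorial k))⁻¹ * (gauss (p+v) y * ((Real.sqrt (p/(p+v)))^k
            * eval (y / Real.sqrt (p+v)) (HeP k))) / Real.sqrt (gauss (p+v) y)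
        = (Real.sqrt (Nat.factorial k))⁻¹ * (Real.sqrt (p/(p+v)))^k
            * eval (y / Real.sqrt (p+v)) (HeP k)
            * (gauss (p+v) y / Real.sqrt (gauss (p+v) y)) := by ring
      _ = _ := by rw [hdiv]; ring
  rw [lamOpStar]
  have hinner : (fun y => lamOp p v (fun t => Real.sqrt (gauss p t) * hermiteN p k t) y
        / Real.sqrt (gauss (p+v) y) * gauss v (y - x))
      = fun y => ((Real.sqrt (Nat.factorial k))⁻¹ * (Real.sqrt (p/(p+v)))^k)
          * (eval (y / Real.sqrt (p+v)) (HeP k) * gauss v (y - x)) := by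
    funext y
    rw [hlam y]
    have hgne : Real.sqrt (gauss (p+v) y) ≠ 0 :=
      (Real.sqrt_pos.mpr (gauss_pos hq y)).ne'
    field_simp
  rw [hinner, integral_const_mul]
  have hsc2 : v < (Real.sqrt (p+v))^2 := by rw [ecq]; linarith
  rw [smooth (Real.sqrt (p+v)) v x hsq hv hsc2 k]
  have e1 : 1 - v/(Real.sqrt (p+v))^2 = p/(p+v) := by
    rw [ecq]; field_simp; ring
  have e2 : x / Real.sqrt (p+v) / Real.sqrt (p/(p+v)) = x / Real.sqrt p := by
    rw [Real.sqrt_div hp.le]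
    field_simp
  rw [e1, e2]
  have e3 : (Real.sqrt (p/(p+v)))^k * (Real.sqrt (p/(p+v)))^k = (p/(p+v))^k := by
    rw [← mul_pow, Real.mul_self_sqrt (by positivity)]
  rw [hermiteN, hermiteH_eq_eval]
  calc Real.sqrt (gauss p x) * ((Real.sqrt (Nat.factorial k))⁻¹ * (Real.sqrt (p/(p+v)))^k
          * ((Real.sqrt (p/(p+v)))^k * eval (x / Real.sqrt p) (HeP k)))
      = ((Real.sqrt (p/(p+v)))^k * (Real.sqrt (p/(p+v)))^k) * (Real.sqrt (gauss p x)
          * ((Real.sqrt (Nat.factorial k))⁻¹ * eval (x / Real.sqrt p) (HeP k))) := by ring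
    _ = _ := by rw [e3]
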